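/- arXiv:1912.12837 — 2 statements merged into one kernel-verified Lean document; each statement's English description precedes it below -/
import Mathlib

section
/- For every closed linear λ-term M there exists an n ≥ 0 such that M I I … I (M applied to n copies of the identity I) β-reduces in finitely many steps to I. -/
/-!
Core development: untyped λ-terms in de Bruijn representation, linearity,
β- and η-reduction, as in the paper "A type-assignment of linear erasure
and duplication" (Curzi, Roversi).
-/

namespace LEMPaper

/-- Untyped λ-terms, de Bruijn representation. -/
inductive Lam : Type
  | var : ℕ → Lam
  | app : Lam → Lam → Lam
  | lam : Lam → Lam
  deriving DecidableEq

namespace Lam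

/-- Lift a renaming under a binder. -/
def liftRen (ρ : ℕ → ℕ) : ℕ → ℕ
  | 0 => 0
  | n + 1 => ρ n + 1

/-- Apply a renaming of free variables. -/
def rename (ρ : ℕ → ℕ) : Lam → Lam
  | var n => var (ρ n)
  | app M N => app (M.rename ρ) (N.rename ρ)
  | lam M => lam (M.rename (liftRen ρ))

/-- Shift all free variables up by one. -/
def shift (M : Lam) : Lam := M.rename Nat.succ

/-- Lift a simultaneous substitution under a binder. -/
def liftSub (s : ℕ → Lam) : ℕ → Lam
  | 0 => var 0
  | n + 1 => (s n).shift

/-- Simultaneous (capture-avoiding) substitution. -/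
def substAll (s : ℕ → Lam) : Lam → Lam
  | var n => s n
  | app M N => app (M.substAll s) (N.substAll s)
  | lam M => lam (M.substAll (liftSub s))

/-- Capture-avoiding substitution `M[N/n]`; the variables above `n` are decremented. -/
def subst (M : Lam) (n : ℕ) (N : Lam) : Lam :=
  M.substAll (fun m => if m < n then var m else if m = n then N else var (m - 1))

/-- Number of (free) occurrences of the variable `n` in a term. -/
def countFree : Lam → ℕ → ℕ
  | var m, n => if m = n then 1 else 0
  | app M N, n => M.countFree n + N.countFree n
  | lam M, n => M.countFree (n + 1)

/-- A term is closed when it has no free variables. -/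
def Closed (M : Lam) : Prop := ∀ n, M.countFree n = 0

/-- A λ-term is linear if all of its free variables occur exactly once in it and
every abstraction binds a variable occurring exactly once in its (linear) body. -/
def Linear : Lam → Prop
  | var _ => True
  | app M N => M.Linear ∧ N.Linear ∧ ∀ n, M.countFree n = 0 ∨ N.countFree n = 0
  | lam M => M.Linear ∧ M.countFree 0 = 1

/-- The identity combinator `I = λx.x`. -/
def I : Lam := lam (var 0)

/-- The linear pairing `⟨M,N⟩ = λz. z M N`. -/
def pair (M N : Lam) : Lam := lam (app (app (var 0) M.shift) N.shift)

/-- The size (number of nodes of the syntax tree) of a term. -/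
def size : Lam → ℕ
  | var _ => 1
  | app M N => M.size + N.size + 1
  | lam M => M.size + 1

/-- One-step β-reduction, closed under arbitrary contexts. -/
inductive Beta : Lam → Lam → Prop
  | beta (M N : Lam) : Beta (app (lam M) N) (M.subst 0 N)
  | appL {M M'} (N : Lam) : Beta M M' → Beta (app M N) (app M' N)
  | appR (M : Lam) {N N'} : Beta N N' → Beta (app M N) (app M N')
  | lam {M M'} : Beta M M' → Beta (lam M) (lam M')

/-- One-step η-reduction `λx.Mx →η M` (x not free in M), closed under contexts. -/
inductive Eta : Lam → Lam → Prop
  | eta (M : Lam) : Eta (lam (app M.shift (var 0))) M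
  | appL {M M'} (N : Lam) : Eta M M' → Eta (app M N) (app M' N)
  | appR (M : Lam) {N N'} : Eta N N' → Eta (app M N) (app M N')
  | lam {M M'} : Eta M M' → Eta (lam M) (lam M')

/-- One-step βη-reduction. -/
def BetaEta (M N : Lam) : Prop := Beta M N ∨ Eta M N

/-- A value is a closed linear λ-term in β-normal form. -/
def IsValue (V : Lam) : Prop := V.Linear ∧ V.Closed ∧ ∀ W, ¬ Beta V W

end Lam

end LEMPaper

namespace LEMPaper

/-- `appI M n` is the application `M I I … I` of `M` to `n` copies of the identity `I`. -/
def appI : Lam → ℕ → Lam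
  | M, 0 => M
  | M, n + 1 => Lam.app (appI M n) Lam.I

namespace Lam

/-- Number of application nodes. -/
def nApp : Lam → ℕ
  | var _ => 0
  | app M N => nApp M + nApp N + 1
  | lam M => nApp M

/-- Sum over λ-subterms of the size of their bodies. -/
def sLam : Lam → ℕ
  | var _ => 0
  | app M N => sLam M + sLam N
  | lam M => size M + sLam M

/-- Number (with multiplicity) of λ-subterms whose body contains the free var `n`. -/
def nAb : Lam → ℕ → ℕ
  | var _, _ => 0
  | app M N, n => nAb M n + nAb N n
  | lam M, n => nAb M (n + 1) + countFree M (n + 1)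

theorem size_pos (M : Lam) : 0 < M.size := by
  cases M <;> simp [size]

theorem size_rename (M : Lam) : ∀ ρ, (M.rename ρ).size = M.size := by
  induction M with
  | var n => intro ρ; rfl
  | app P Q ihP ihQ => intro ρ; simp [rename, size, ihP, ihQ]
  | lam P ih => intro ρ; simp [rename, size, ih]

theorem nApp_rename (M : Lam) : ∀ ρ, (M.rename ρ).nApp = M.nApp := by
  induction M with
  | var n => intro ρ; rfl
  | app P Q ihP ihQ => intro ρ; simp [rename, nApp, ihP, ihQ]
  | lam P ih => intro ρ; simp [rename, nApp, ih]

theorem sLam_rename (M : Lam) : ∀ ρ, (M.rename ρ).sLam = M.sLam := by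
  induction M with
  | var n => intro ρ; rfl
  | app P Q ihP ihQ => intro ρ; simp [rename, sLam, ihP, ihQ]
  | lam P ih => intro ρ; simp [rename, sLam, ih, size_rename]

theorem liftRen_strictMono {ρ : ℕ → ℕ} (h : StrictMono ρ) : StrictMono (liftRen ρ) := by
  intro a b hab
  match a, b with
  | _, 0 => omega
  | 0, b + 1 => simp [liftRen]
  | a + 1, b + 1 =>
    simp only [liftRen]
    have := h (show a < b by omega)
    omega

theorem countFree_rename_eq (M : Lam) :
    ∀ ρ, StrictMono ρ → ∀ n, (M.rename ρ).countFree (ρ n) = M.countFree n := by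
  induction M with
  | var m =>
    intro ρ hρ n
    simp only [rename, countFree]
    by_cases h : m = n
    · simp [h]
    · simp [h, hρ.injective.ne h]
  | app P Q ihP ihQ => intro ρ hρ n; simp [rename, countFree, ihP ρ hρ n, ihQ ρ hρ n]
  | lam P ih =>
    intro ρ hρ n
    have : ρ n + 1 = liftRen ρ (n + 1) := rfl
    simp only [rename, countFree, this]
    exact ih _ (liftRen_strictMono hρ) (n + 1)

theorem countFree_rename_ne (M : Lam) :
    ∀ ρ k, (∀ m, ρ m ≠ k) → (M.rename ρ).countFree k = 0 := by
  induction M with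
  | var m => intro ρ k h; simp [rename, countFree, h m]
  | app P Q ihP ihQ => intro ρ k h; simp [rename, countFree, ihP ρ k h, ihQ ρ k h]
  | lam P ih =>
    intro ρ k h
    simp only [rename, countFree]
    apply ih
    intro m
    match m with
    | 0 => simp [liftRen]
    | m + 1 => simp only [liftRen]; have := h m; omega

theorem linear_rename (M : Lam) :
    ∀ ρ, StrictMono ρ → M.Linear → (M.rename ρ).Linear := by
  induction M with
  | var m => intro ρ hρ _; trivial
  | app P Q ihP ihQ =>
    intro ρ hρ hlin
    obtain ⟨hP, hQ, hdisj⟩ := hlin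
    refine ⟨ihP ρ hρ hP, ihQ ρ hρ hQ, ?_⟩
    intro n
    by_cases h : ∃ m, ρ m = n
    · obtain ⟨m, rfl⟩ := h
      rw [countFree_rename_eq P ρ hρ, countFree_rename_eq Q ρ hρ]
      exact hdisj m
    · push_neg at h
      exact Or.inl (countFree_rename_ne P ρ n h)
  | lam P ih =>
    intro ρ hρ hlin
    obtain ⟨hP, hc⟩ := hlin
    refine ⟨ih _ (liftRen_strictMono hρ) hP, ?_⟩
    have : (0 : ℕ) = liftRen ρ 0 := rfl
    rw [this, countFree_rename_eq P _ (liftRen_strictMono hρ) 0]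
    exact hc

theorem succ_strictMono : StrictMono Nat.succ := fun _ _ h => Nat.succ_lt_succ h

theorem size_shift (M : Lam) : M.shift.size = M.size := size_rename M _
theorem nApp_shift (M : Lam) : M.shift.nApp = M.nApp := nApp_rename M _
theorem sLam_shift (M : Lam) : M.shift.sLam = M.sLam := sLam_rename M _
theorem linear_shift {M : Lam} (h : M.Linear) : M.shift.Linear :=
  linear_rename M _ succ_strictMono h
theorem countFree_shift_succ (M : Lam) (n : ℕ) : M.shift.countFree (n + 1) = M.countFree n :=
  countFree_rename_eq M _ succ_strictMono n
theorem countFree_shift_zero (M : Lam) : M.shift.countFree 0 = 0 :=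
  countFree_rename_ne M _ 0 (fun m => Nat.succ_ne_zero m)

/-- The substitution function used by `subst`. -/
def sFn (n : ℕ) (N : Lam) : ℕ → Lam :=
  fun m => if m < n then var m else if m = n then N else var (m - 1)

theorem subst_eq (M : Lam) (n : ℕ) (N : Lam) : M.subst n N = M.substAll (sFn n N) := rfl

theorem substAll_congr (M : Lam) : ∀ s t : ℕ → Lam, (∀ n, s n = t n) →
    M.substAll s = M.substAll t := by
  induction M with
  | var m => intro s t h; exact h m
  | app P Q ihP ihQ => intro s t h; simp [substAll, ihP s t h, ihQ s t h]
  | lam P ih =>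
    intro s t h
    simp only [substAll, lam.injEq]
    apply ih
    intro m
    match m with
    | 0 => rfl
    | m + 1 => simp [liftSub, h m]

theorem liftSub_sFn (n : ℕ) (N : Lam) :
    ∀ m, liftSub (sFn n N) m = sFn (n + 1) N.shift m := by
  intro m
  match m with
  | 0 => simp [liftSub, sFn]
  | m + 1 =>
    simp only [liftSub, sFn]
    rcases Nat.lt_trichotomy m n with h | h | h
    · simp only [if_pos h, if_pos (show m + 1 < n + 1 by omega)]
      rfl
    · subst h
      simp [shift]
    · rw [if_neg (by omega), if_neg (by omega), if_neg (by omega), if_neg (by omega)]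
      show Lam.rename _ _ = _
      simp only [rename]
      congr 1
      omega

theorem subst_lam (M : Lam) (n : ℕ) (N : Lam) :
    (lam M).subst n N = lam (M.subst (n + 1) N.shift) := by
  show lam (M.substAll (liftSub (sFn n N))) = lam (M.substAll (sFn (n + 1) N.shift))
  rw [substAll_congr M _ _ (liftSub_sFn n N)]

theorem subst_var (m n : ℕ) (N : Lam) :
    (var m).subst n N = if m < n then var m else if m = n then N else var (m - 1) := rfl

theorem subst_app (P Q : Lam) (n : ℕ) (N : Lam) :
    (app P Q).subst n N = app (P.subst n N) (Q.subst n N) := rfl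

theorem countFree_subst (M : Lam) : ∀ (n : ℕ) (N : Lam) (k : ℕ),
    (M.subst n N).countFree k =
      M.countFree (if k < n then k else k + 1) + M.countFree n * N.countFree k := by
  induction M with
  | var m =>
    intro n N k
    rw [subst_var]
    rcases Nat.lt_trichotomy m n with h | h | h
    · rw [if_pos h]
      simp only [countFree]
      split_ifs <;> omega
    · subst h
      rw [if_neg (by omega), if_pos rfl]
      simp only [countFree]
      split_ifs <;> omega
    · rw [if_neg (by omega), if_neg (by omega)]
      simp only [countFree]
      split_ifs <;> omega
  | app P Q ihP ihQ =>
    intro n N k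
    rw [subst_app]
    simp only [countFree, ihP n N k, ihQ n N k]
    ring
  | lam P ih =>
    intro n N k
    rw [subst_lam]
    simp only [countFree, ih (n + 1) N.shift (k + 1), countFree_shift_succ]
    congr 2
    split_ifs <;> omega

theorem size_subst (M : Lam) : ∀ (n : ℕ) (N : Lam),
    (M.subst n N).size + M.countFree n = M.size + M.countFree n * N.size := by
  induction M with
  | var m =>
    intro n N
    rw [subst_var]
    rcases Nat.lt_trichotomy m n with h | h | h
    · rw [if_pos h]; simp only [size, countFree]; split_ifs <;> omega
    · subst h
      rw [if_neg (by omega), if_pos rfl]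
      simp [size, countFree]
      omega
    · rw [if_neg (by omega), if_neg (by omega)]
      simp only [size, countFree]
      split_ifs <;> omega
  | app P Q ihP ihQ =>
    intro n N
    rw [subst_app]
    simp only [size, countFree]
    have h1 := ihP n N
    have h2 := ihQ n N
    nlinarith [h1, h2]
  | lam P ih =>
    intro n N
    rw [subst_lam]
    simp only [size, countFree]
    have h := ih (n + 1) N.shift
    rw [size_shift] at h
    linarith

theorem nApp_subst (M : Lam) : ∀ (n : ℕ) (N : Lam),
    (M.subst n N).nApp = M.nApp + M.countFree n * N.nApp := by
  induction M with
  | var m =>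
    intro n N
    rw [subst_var]
    rcases Nat.lt_trichotomy m n with h | h | h
    · rw [if_pos h]; simp only [nApp, countFree]; split_ifs <;> omega
    · subst h
      rw [if_neg (by omega), if_pos rfl]
      simp [nApp, countFree]
    · rw [if_neg (by omega), if_neg (by omega)]
      simp only [nApp, countFree]
      split_ifs <;> omega
  | app P Q ihP ihQ =>
    intro n N
    rw [subst_app]
    simp only [nApp, countFree, ihP n N, ihQ n N]
    ring
  | lam P ih =>
    intro n N
    rw [subst_lam]
    simp only [nApp, countFree, ih (n + 1) N.shift, nApp_shift]

theorem sLam_subst (M : Lam) : ∀ (n : ℕ) (N : Lam),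
    (M.subst n N).sLam + M.nAb n =
      M.sLam + M.countFree n * N.sLam + M.nAb n * N.size := by
  induction M with
  | var m =>
    intro n N
    rw [subst_var]
    rcases Nat.lt_trichotomy m n with h | h | h
    · rw [if_pos h]; simp only [sLam, nAb, countFree]; split_ifs <;> omega
    · subst h
      rw [if_neg (by omega), if_pos rfl]
      simp [sLam, nAb, countFree]
    · rw [if_neg (by omega), if_neg (by omega)]
      simp only [sLam, nAb, countFree]
      split_ifs <;> omega
  | app P Q ihP ihQ =>
    intro n N
    rw [subst_app]
    simp only [sLam, nAb, countFree]
    have h1 := ihP n N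
    have h2 := ihQ n N
    nlinarith [h1, h2]
  | lam P ih =>
    intro n N
    rw [subst_lam]
    simp only [sLam, nAb, countFree]
    have h1 := ih (n + 1) N.shift
    rw [sLam_shift, size_shift] at h1
    have h2 := size_subst P (n + 1) N.shift
    rw [size_shift] at h2
    nlinarith [h1, h2]

theorem nAb_eq_zero (M : Lam) : ∀ n, M.countFree n = 0 → M.nAb n = 0 := by
  induction M with
  | var m => intro n _; rfl
  | app P Q ihP ihQ =>
    intro n h
    simp only [countFree] at h
    simp [nAb, ihP n (by omega), ihQ n (by omega)]
  | lam P ih =>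
    intro n h
    simp only [countFree] at h
    simp [nAb, ih (n + 1) h, h]

theorem nAb_bound (M : Lam) : ∀ n, M.Linear → M.countFree n = 1 →
    M = var n ∨ M.nAb n + 2 ≤ M.size := by
  induction M with
  | var m =>
    intro n _ h
    by_cases hm : m = n
    · exact Or.inl (by rw [hm])
    · exfalso
      simp [countFree, hm] at h
  | app P Q ihP ihQ =>
    intro n hlin h
    obtain ⟨hP, hQ, _⟩ := hlin
    simp only [countFree] at h
    right
    rcases Nat.eq_zero_or_pos (P.countFree n) with hp | hp
    · have hq : Q.countFree n = 1 := by omega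
      have hDP : P.nAb n = 0 := nAb_eq_zero P n hp
      rcases ihQ n hQ hq with rfl | hb
      · simp only [nAb, size, hDP]
        omega
      · simp only [nAb, size]
        omega
    · have hp1 : P.countFree n = 1 := by omega
      have hq : Q.countFree n = 0 := by omega
      have hDQ : Q.nAb n = 0 := nAb_eq_zero Q n hq
      rcases ihP n hP hp1 with rfl | hb
      · simp only [nAb, size, hDQ]
        omega
      · simp only [nAb, size]
        omega
  | lam P ih =>
    intro n hlin h
    obtain ⟨hP, hc⟩ := hlin
    simp only [countFree] at h
    right
    rcases ih (n + 1) hP h with rfl | hb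
    · exfalso
      simp [countFree] at hc
    · simp only [nAb, size]
      omega

theorem linear_subst (M : Lam) : ∀ (n : ℕ) (N : Lam), M.Linear → N.Linear →
    M.countFree n ≤ 1 →
    (∀ k, M.countFree (if k < n then k else k + 1) = 0 ∨ N.countFree k = 0) →
    (M.subst n N).Linear := by
  induction M with
  | var m =>
    intro n N _ hN _ _
    rw [subst_var]
    split_ifs with h1 h2
    · trivial
    · exact hN
    · trivial
  | app P Q ihP ihQ =>
    intro n N hlin hN hle hdisj
    obtain ⟨hP, hQ, hd⟩ := hlin
    have hle' : P.countFree n + Q.countFree n ≤ 1 := by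
      simpa [countFree] using hle
    rw [subst_app]
    refine ⟨ihP n N hP hN (by omega) ?_, ihQ n N hQ hN (by omega) ?_, ?_⟩
    · intro k
      rcases hdisj k with h | h
      · simp only [countFree] at h; exact Or.inl (by omega)
      · exact Or.inr h
    · intro k
      rcases hdisj k with h | h
      · simp only [countFree] at h; exact Or.inl (by omega)
      · exact Or.inr h
    · intro k
      rw [countFree_subst, countFree_subst]
      rcases hdisj k with h | h
      · simp only [countFree] at h
        rcases hd n with h' | h'
        · left; rw [h']; omega
        · right; rw [h']; omega
      · rcases hd (if k < n then k else k + 1) with h' | h'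
        · left; rw [h', h]; ring
        · right; rw [h', h]; ring
  | lam P ih =>
    intro n N hlin hN hle hdisj
    obtain ⟨hP, hc⟩ := hlin
    rw [subst_lam]
    refine ⟨ih (n + 1) N.shift hP (linear_shift hN) (by simpa [countFree] using hle) ?_, ?_⟩
    · intro k
      match k with
      | 0 => exact Or.inr (countFree_shift_zero N)
      | j + 1 =>
        rw [countFree_shift_succ]
        rcases hdisj j with h | h
        · simp only [countFree] at h
          left
          split_ifs at h ⊢ <;> omega
        · exact Or.inr h
    · rw [countFree_subst]
      simp only [if_pos (Nat.succ_pos n), countFree_shift_zero, Nat.mul_zero, Nat.add_zero]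
      exact hc

theorem beta_countFree {M M' : Lam} (h : Beta M M') :
    M.Linear → ∀ k, M'.countFree k = M.countFree k := by
  induction h with
  | beta B Q =>
    intro hlin k
    obtain ⟨⟨_, hc⟩, _, _⟩ := hlin
    rw [countFree_subst]
    simp only [countFree, hc]
    split_ifs <;> omega
  | appL Q _ ih =>
    intro hlin k
    obtain ⟨hP, _, _⟩ := hlin
    simp only [countFree, ih hP k]
  | appR P _ ih =>
    intro hlin k
    obtain ⟨_, hQ, _⟩ := hlin
    simp only [countFree, ih hQ k]
  | lam _ ih =>
    intro hlin k
    obtain ⟨hP, _⟩ := hlin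
    simp only [countFree, ih hP (k + 1)]

theorem beta_linear {M M' : Lam} (h : Beta M M') (hlin : M.Linear) : M'.Linear := by
  induction h with
  | beta B Q =>
    obtain ⟨⟨hB, hc⟩, hQ, hd⟩ := hlin
    apply linear_subst B 0 Q hB hQ (by omega)
    intro k
    simpa [countFree] using hd k
  | appL Q hstep ih =>
    obtain ⟨hP, hQ, hd⟩ := hlin
    refine ⟨ih hP, hQ, ?_⟩
    intro n
    rw [beta_countFree hstep hP n]
    exact hd n
  | appR P hstep ih =>
    obtain ⟨hP, hQ, hd⟩ := hlin
    refine ⟨hP, ih hQ, ?_⟩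
    intro n
    rw [beta_countFree hstep hQ n]
    exact hd n
  | lam hstep ih =>
    obtain ⟨hP, hc⟩ := hlin
    exact ⟨ih hP, by rw [beta_countFree hstep hP 0]; exact hc⟩

theorem beta_nApp {M M' : Lam} (h : Beta M M') :
    M.Linear → M'.nApp + 1 = M.nApp := by
  induction h with
  | beta B Q =>
    intro hlin
    obtain ⟨⟨_, hc⟩, _, _⟩ := hlin
    rw [nApp_subst]
    simp only [nApp, hc]
    omega
  | appL Q _ ih =>
    intro hlin
    obtain ⟨hP, _, _⟩ := hlin
    simp only [nApp]
    have := ih hP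
    omega
  | appR P _ ih =>
    intro hlin
    obtain ⟨_, hQ, _⟩ := hlin
    simp only [nApp]
    have := ih hQ
    omega
  | lam _ ih =>
    intro hlin
    obtain ⟨hP, _⟩ := hlin
    simp only [nApp]
    exact ih hP

theorem closed_normal_lam (M : Lam) (hcl : M.Closed) (hnf : ∀ M', ¬ Beta M M') :
    ∃ B, M = lam B := by
  induction M with
  | var m => exact absurd (hcl m) (by simp [countFree])
  | app P Q ihP ihQ =>
    exfalso
    have hPcl : P.Closed := by
      intro n
      have := hcl n
      simp only [countFree] at this
      omega
    have hPnf : ∀ P', ¬ Beta P P' := fun P' h => hnf (app P' Q) (Beta.appL Q h)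
    obtain ⟨B, rfl⟩ := ihP hPcl hPnf
    exact hnf (B.subst 0 Q) (Beta.beta B Q)
  | lam P _ => exact ⟨P, rfl⟩

theorem countFree_I (k : ℕ) : I.countFree k = 0 := by simp [I, countFree]
theorem linear_I : I.Linear := ⟨trivial, rfl⟩
theorem nApp_I : I.nApp = 0 := rfl
theorem sLam_I : I.sLam = 1 := rfl
theorem size_I : I.size = 2 := rfl

end Lam

theorem beta_appI {M M' : Lam} (h : Lam.Beta M M') :
    ∀ n, Lam.Beta (appI M n) (appI M' n) := by
  intro n
  induction n with
  | zero => exact h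
  | succ n ih => exact Lam.Beta.appL _ ih

theorem appI_app_I (M : Lam) : ∀ n, appI (Lam.app M Lam.I) n = appI M (n + 1) := by
  intro n
  induction n with
  | zero => rfl
  | succ n ih => simp only [appI, ih]

theorem key : ∀ a s (M : Lam), M.Linear → M.Closed → M.nApp < a → M.sLam < s →
    ∃ n : ℕ, Relation.ReflTransGen Lam.Beta (appI M n) Lam.I := by
  intro a
  induction a using Nat.strong_induction_on with
  | _ a ihA =>
  intro s
  induction s using Nat.strong_induction_on with
  | _ s ihS =>
  intro M hlin hcl hA hS
  by_cases hred : ∃ M', Lam.Beta M M'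
  · obtain ⟨M', hstep⟩ := hred
    have hA' : M'.nApp + 1 = M.nApp := Lam.beta_nApp hstep hlin
    obtain ⟨n, hn⟩ := ihA M.nApp hA (M'.sLam + 1) M' (Lam.beta_linear hstep hlin)
      (fun k => by rw [Lam.beta_countFree hstep hlin k]; exact hcl k)
      (by omega) (Nat.lt_succ_self _)
    exact ⟨n, Relation.ReflTransGen.head (beta_appI hstep n) hn⟩
  · push_neg at hred
    obtain ⟨B, rfl⟩ := Lam.closed_normal_lam M hcl hred
    obtain ⟨hB, hc⟩ := hlin
    by_cases hI : B = Lam.var 0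
    · subst hI
      exact ⟨0, Relation.ReflTransGen.refl⟩
    · set M' := B.subst 0 Lam.I with hM'
      have hstep : Lam.Beta (Lam.app (Lam.lam B) Lam.I) M' := Lam.Beta.beta B Lam.I
      have hlin' : M'.Linear := by
        apply Lam.linear_subst B 0 Lam.I hB Lam.linear_I (by omega)
        intro k
        exact Or.inr (Lam.countFree_I k)
      have hcl' : M'.Closed := by
        intro k
        rw [Lam.countFree_subst]
        simp only [Lam.countFree_I, Nat.mul_zero, Nat.add_zero]
        have := hcl k
        simpa [Lam.countFree] using this
      have hA' : M'.nApp = B.nApp := by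
        rw [Lam.nApp_subst, Lam.nApp_I]
        omega
      have hS' : M'.sLam < (Lam.lam B).sLam := by
        have h1 := Lam.sLam_subst B 0 Lam.I
        rw [Lam.sLam_I, Lam.size_I, ← hM'] at h1
        have h2 : B.nAb 0 + 2 ≤ B.size := by
          rcases Lam.nAb_bound B 0 hB hc with h | h
          · exact absurd h hI
          · exact h
        simp only [Lam.sLam]
        omega
      obtain ⟨n, hn⟩ := ihS (Lam.lam B).sLam hS M' hlin' hcl'
        (by simpa only [Lam.nApp, hA'] using hA) hS'
      refine ⟨n + 1, ?_⟩
      rw [← appI_app_I]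
      exact Relation.ReflTransGen.head (beta_appI hstep n) hn

/-- Lemma 2.1, Mackie/Mairson: for every closed linear λ-term `M`
there exists `n ≥ 0` such that `M I I … I` (with `n` identities) β-reduces to `I`. -/
theorem closed_linear_term_erases_to_identity
    (M : Lam) (hlin : M.Linear) (hcl : M.Closed) :
    ∃ n : ℕ, Relation.ReflTransGen Lam.Beta (appI M n) Lam.I :=
  key (M.nApp + 1) (M.sLam + 1) M hlin hcl (Nat.lt_succ_self _) (Nat.lt_succ_self _)

end LEMPaper
end

section
/- For every cut-free derivation D ⊲ Γ ⊢ M : B in IMLL₂ that contains no instance of the rule ∀L, the following inequalities hold: |M| ≤ |M^Γ_B| ≤ |Γ⁻| + |B⁻| ≤ 2·|M^Γ_B|, where M^Γ_B is the η-long normal form of M obtained by η-expanding D. -/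
namespace LEMPaper

/-- Types of second-order intuitionistic multiplicative linear logic `IMLL₂`:
`A ::= α | A ⊸ B | ∀α.A` (type variables in de Bruijn representation). -/
inductive Ty : Type
  | var : ℕ → Ty
  | arr : Ty → Ty → Ty
  | all : Ty → Ty
  deriving DecidableEq

namespace Ty

def liftRen (ρ : ℕ → ℕ) : ℕ → ℕ
  | 0 => 0
  | n + 1 => ρ n + 1

def rename (ρ : ℕ → ℕ) : Ty → Ty
  | var n => var (ρ n)
  | arr A B => arr (A.rename ρ) (B.rename ρ)
  | all A => all (A.rename (liftRen ρ))

/-- Shift all free type variables up by one. -/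
def shift (A : Ty) : Ty := A.rename Nat.succ

def liftSub (s : ℕ → Ty) : ℕ → Ty
  | 0 => var 0
  | n + 1 => (s n).shift

def substAll (s : ℕ → Ty) : Ty → Ty
  | var n => s n
  | arr A B => arr (A.substAll s) (B.substAll s)
  | all A => all (A.substAll (liftSub s))

/-- `A.instTop B` instantiates the outermost bound type variable of `A` with `B`
(i.e. `A⟨B/α⟩` where `α` is the variable bound by an enclosing `∀`). -/
def instTop (A B : Ty) : Ty :=
  A.substAll (fun n => match n with | 0 => B | m + 1 => var m)

/-- All free type variables are `< d`. -/
def ClosedAt : Ty → ℕ → Prop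
  | var n, d => n < d
  | arr A B, d => A.ClosedAt d ∧ B.ClosedAt d
  | all A, d => A.ClosedAt (d + 1)

/-- A type is closed when it has no free type variables. -/
def Closed (A : Ty) : Prop := A.ClosedAt 0

/-- `isPiSigma A true` means `A` is a `Π₁`-type, `isPiSigma A false` that `A` is a
`Σ₁`-type, following the mutual grammar
`Π₁ ::= α | Σ₁ ⊸ Π₁ | ∀α.Π₁` and `Σ₁ ::= α | Π₁ ⊸ Σ₁`. -/
def isPiSigma : Ty → Bool → Prop
  | var _, _ => True
  | arr A B, b => A.isPiSigma (!b) ∧ B.isPiSigma b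
  | all A, b => b = true ∧ A.isPiSigma true

/-- A ground type is a closed `Π₁`-type. -/
def Ground (A : Ty) : Prop := A.isPiSigma true ∧ A.Closed

/-- The unity type `1 = ∀α.(α ⊸ α)`. -/
def one : Ty := all (arr (var 0) (var 0))

/-- The tensor product `A ⊗ B = ∀α.(A ⊸ B ⊸ α) ⊸ α`. -/
def tensor (A B : Ty) : Ty :=
  all (arr (arr A.shift (arr B.shift (var 0))) (var 0))

end Ty

/-- Typing contexts for the linear λ-calculus: position `i` records the type of the
de Bruijn variable `i` (`none` meaning that the variable is not available). -/
abbrev Ctx := List (Option Ty)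

/-- Splitting of a linear context into two disjoint parts. -/
inductive Split : Ctx → Ctx → Ctx → Prop
  | nil : Split [] [] []
  | left {Γ Γ₁ Γ₂ A} : Split Γ Γ₁ Γ₂ → Split (some A :: Γ) (some A :: Γ₁) (none :: Γ₂)
  | right {Γ Γ₁ Γ₂ A} : Split Γ Γ₁ Γ₂ → Split (some A :: Γ) (none :: Γ₁) (some A :: Γ₂)
  | skip {Γ Γ₁ Γ₂} : Split Γ Γ₁ Γ₂ → Split (none :: Γ) (none :: Γ₁) (none :: Γ₂)

/-- The context contains exactly one (available) assumption, of type `A`, at `n`. -/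
def OnlyAt (Γ : Ctx) (n : ℕ) (A : Ty) : Prop :=
  Γ[n]? = some (some A) ∧ ∀ m, m ≠ n → ∀ B, Γ[m]? ≠ some (some B)

/-- Type assignment of `IMLL₂` for the linear λ-calculus: variables are used exactly
once (ax and the context splitting of the application rule enforce linearity),
plus the second-order rules for `∀` (with the usual eigenvariable condition,
rendered by shifting the context in `allI`). -/
inductive HasTy : Ctx → Lam → Ty → Prop
  | var {Γ n A} : OnlyAt Γ n A → HasTy Γ (.var n) A
  | lam {Γ M A B} : HasTy (some A :: Γ) M B → HasTy Γ (.lam M) (A.arr B)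
  | app {Γ Γ₁ Γ₂ M N A B} : Split Γ Γ₁ Γ₂ →
      HasTy Γ₁ M (A.arr B) → HasTy Γ₂ N A → HasTy Γ (.app M N) B
  | allI {Γ M A} : HasTy (Γ.map (Option.map Ty.shift)) M A → HasTy Γ M (.all A)
  | allE {Γ M A} (B : Ty) : HasTy Γ M (.all A) → HasTy Γ M (A.instTop B)

end LEMPaper

namespace LEMPaper

/-- The renaming swapping the de Bruijn variables `k` and `k+1`. -/
def swapVar (k : ℕ) (n : ℕ) : ℕ :=
  if n = k then k + 1 else if n = k + 1 then k else n

/-- Term produced by the `cut` rule: substitute `N` (whose variables point into the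
first `g` positions) for the variable `0` of `M`, re-addressing the other
variables of `M` past the `g` positions occupied by the left context. -/
def cutTm (g : ℕ) (N M : Lam) : Lam :=
  M.substAll (fun n => match n with
    | 0 => N
    | m + 1 => .var (g + m))

/-- Term produced by the `⊸L` rule: `M[yN/x]`, where the new variable `y` sits at
position `0`, the left context occupies positions `1..g` and the right context the
following positions. -/
def arrLTm (g : ℕ) (N M : Lam) : Lam :=
  M.substAll (fun n => match n with
    | 0 => .app (.var 0) N.shift
    | m + 1 => .var (g + 1 + m))

/-- Sequent-calculus derivations of `IMLL₂` (Figure 1 of the paper), with contexts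
as lists (the implicit exchange of multiset contexts is rendered by the
size-irrelevant structural rule `exch`). -/
inductive SDer : List Ty → Lam → Ty → Type
  | ax (A : Ty) : SDer [A] (.var 0) A
  | exch (Γ₁ : List Ty) {A B : Ty} {Γ₂ : List Ty} {M : Lam} {C : Ty} :
      SDer (Γ₁ ++ A :: B :: Γ₂) M C →
      SDer (Γ₁ ++ B :: A :: Γ₂) (M.rename (swapVar Γ₁.length)) C
  | cut (Γ : List Ty) {Δ : List Ty} {N M : Lam} {A C : Ty} :
      SDer Γ N A → SDer (A :: Δ) M C →
      SDer (Γ ++ Δ) (cutTm Γ.length N M) C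
  | arrR {Γ : List Ty} {M : Lam} {A B : Ty} :
      SDer (A :: Γ) M B → SDer Γ (.lam M) (A.arr B)
  | arrL (Γ : List Ty) {Δ : List Ty} {N M : Lam} {A B C : Ty} :
      SDer Γ N A → SDer (B :: Δ) M C →
      SDer ((A.arr B) :: (Γ ++ Δ)) (arrLTm Γ.length N M) C
  | allR {Γ : List Ty} {M : Lam} {A : Ty} :
      SDer (Γ.map Ty.shift) M A → SDer Γ M (.all A)
  | allL {Γ : List Ty} {M : Lam} {A C : Ty} (B : Ty) :
      SDer ((A.instTop B) :: Γ) M C → SDer ((.all A) :: Γ) M C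

namespace SDer

/-- A derivation is cut-free when it contains no instance of the `cut` rule. -/
def cutFree : ∀ {Γ M A}, SDer Γ M A → Prop
  | _, _, _, .ax _ => True
  | _, _, _, .exch _ D => D.cutFree
  | _, _, _, .cut _ _ _ => False
  | _, _, _, .arrR D => D.cutFree
  | _, _, _, .arrL _ D₁ D₂ => D₁.cutFree ∧ D₂.cutFree
  | _, _, _, .allR D => D.cutFree
  | _, _, _, .allL _ D => D.cutFree

/-- A derivation contains no instance of the `∀L` rule. -/
def noForallL : ∀ {Γ M A}, SDer Γ M A → Prop
  | _, _, _, .ax _ => True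
  | _, _, _, .exch _ D => D.noForallL
  | _, _, _, .cut _ D₁ D₂ => D₁.noForallL ∧ D₂.noForallL
  | _, _, _, .arrR D => D.noForallL
  | _, _, _, .arrL _ D₁ D₂ => D₁.noForallL ∧ D₂.noForallL
  | _, _, _, .allR D => D.noForallL
  | _, _, _, .allL _ _ => False

end SDer

/-- The η-expansion of the variable term `x` at type `A` (Lemma A.1):
`x^α_α = x`, `x^{∀α.B}_{∀α.B} = x^B_B`, `x^{B⊸C}_{B⊸C} = λy.(x y^B_B)^C_C`. -/
def etaExpVar : Ty → Lam → Lam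
  | .var _, x => x
  | .all B, x => etaExpVar B x
  | .arr B C, x => .lam (etaExpVar C (.app x.shift (etaExpVar B (.var 0))))

/-- The subject `M^Γ_B` of the η-expansion of a derivation `D ⊲ Γ ⊢ M : B`
(Definition A.1): every axiom `x : A ⊢ x : A` is replaced by the canonical
derivation of `x : A ⊢ x^A_A : A` whose axioms are all atomic. -/
def SDer.etaTerm : ∀ {Γ M A}, SDer Γ M A → Lam
  | _, _, _, .ax A => etaExpVar A (.var 0)
  | _, _, _, .exch Γ₁ D => D.etaTerm.rename (swapVar Γ₁.length)
  | _, _, _, .cut Γ D₁ D₂ => cutTm Γ.length D₁.etaTerm D₂.etaTerm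
  | _, _, _, .arrR D => .lam D.etaTerm
  | _, _, _, .arrL Γ D₁ D₂ => arrLTm Γ.length D₁.etaTerm D₂.etaTerm
  | _, _, _, .allR D => D.etaTerm
  | _, _, _, .allL _ D => D.etaTerm

/-- `|A⁻|`: the size of the type obtained from `A` by stripping away all the
universal quantifiers (`α⁻ = α`, `(A⊸B)⁻ = A⁻⊸B⁻`, `(∀α.A)⁻ = A⁻⟨γ/α⟩`). -/
def Ty.minusSize : Ty → ℕ
  | .var _ => 1
  | .arr A B => A.minusSize + B.minusSize + 1
  | .all A => A.minusSize

/-! Auxiliary lemmas for Statement 19. -/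

namespace Lam

theorem liftRen_inj {ρ : ℕ → ℕ} (h : Function.Injective ρ) :
    Function.Injective (liftRen ρ) := by
  intro a b hab
  cases a with
  | zero => cases b with
    | zero => rfl
    | succ b => simp [liftRen] at hab
  | succ a => cases b with
    | zero => simp [liftRen] at hab
    | succ b => simp only [liftRen] at hab; exact congrArg Nat.succ (h (by omega))

theorem countFree_rename_inj (M : Lam) : ∀ (ρ : ℕ → ℕ), Function.Injective ρ →
    ∀ n, (M.rename ρ).countFree (ρ n) = M.countFree n := by
  induction M with
  | var m => intro ρ h n; simp only [rename, countFree]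
             by_cases hm : m = n
             · subst hm; simp
             · rw [if_neg (fun e => hm (h e)), if_neg hm]
  | app M N ihM ihN => intro ρ h n; simp [rename, countFree, ihM ρ h n, ihN ρ h n]
  | lam M ih => intro ρ h n
                have : ρ n + 1 = liftRen ρ (n + 1) := rfl
                simp only [rename, countFree, this]
                exact ih (liftRen ρ) (liftRen_inj h) (n + 1)

theorem countFree_rename_notin (M : Lam) : ∀ (ρ : ℕ → ℕ) (n : ℕ), (∀ m, ρ m ≠ n) →
    (M.rename ρ).countFree n = 0 := by
  induction M with
  | var m => intro ρ n h; simp [rename, countFree, h m]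
  | app M N ihM ihN => intro ρ n h; simp [rename, countFree, ihM ρ n h, ihN ρ n h]
  | lam M ih => intro ρ n h
                simp only [rename, countFree]
                apply ih
                intro m hm
                cases m with
                | zero => simp [liftRen] at hm
                | succ m => exact h m (by simpa [liftRen] using hm)

theorem countFree_shift_eq (M : Lam) (n : ℕ) :
    M.shift.countFree n = if n = 0 then 0 else M.countFree (n - 1) := by
  cases n with
  | zero => simp [countFree_shift_zero]
  | succ n => simp [countFree_shift_succ]

theorem countFree_rename_invol (M : Lam) (ρ : ℕ → ℕ) (h : ∀ n, ρ (ρ n) = n) (n : ℕ) :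
    (M.rename ρ).countFree n = M.countFree (ρ n) := by
  have hinj : Function.Injective ρ := fun a b hab => by
    have := congrArg ρ hab; rwa [h, h] at this
  have := countFree_rename_inj M ρ hinj (ρ n)
  rwa [h n] at this

theorem countFree_substAll (M : Lam) : ∀ (σ : ℕ → Lam) (n K : ℕ),
    (∀ m, K ≤ m → M.countFree m = 0) →
    (M.substAll σ).countFree n
      = ∑ m ∈ Finset.range K, M.countFree m * (σ m).countFree n := by
  induction M with
  | var j =>
    intro σ n K hK
    have hj : j < K := by
      by_contra h
      have := hK j (by omega)
      simp [countFree] at this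
    simp only [substAll, countFree]
    rw [Finset.sum_eq_single j]
    · simp
    · intro b _ hb
      rw [if_neg (fun e => hb e.symm)]
      simp
    · intro h; exact absurd (Finset.mem_range.mpr hj) h
  | app M N ihM ihN =>
    intro σ n K hK
    have hM : ∀ m, K ≤ m → M.countFree m = 0 := fun m hm => by
      have := hK m hm; simp only [countFree] at this; omega
    have hN : ∀ m, K ≤ m → N.countFree m = 0 := fun m hm => by
      have := hK m hm; simp only [countFree] at this; omega
    simp only [substAll, countFree, ihM σ n K hM, ihN σ n K hN, ← Finset.sum_add_distrib,
      add_mul]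
  | lam M ih =>
    intro σ n K hK
    have hM : ∀ m, K + 1 ≤ m → M.countFree m = 0 := by
      intro m hm
      cases m with
      | zero => omega
      | succ m => exact hK m (by omega)
    simp only [substAll, countFree]
    rw [ih (liftSub σ) (n + 1) (K + 1) hM, Finset.sum_range_succ']
    simp [liftSub, countFree, countFree_shift_succ]

theorem size_substAll_one (M : Lam) : ∀ (σ : ℕ → Lam) (k : ℕ),
    (∀ m, m ≠ k → ∃ j, σ m = .var j) →
    (M.substAll σ).size + M.countFree k = M.size + M.countFree k * (σ k).size := by
  induction M with
  | var j =>
    intro σ k h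
    by_cases hj : j = k
    · subst hj; simp [substAll, countFree, size]; omega
    · obtain ⟨i, hi⟩ := h j hj
      simp [substAll, countFree, hj, hi, size]
  | app M N ihM ihN =>
    intro σ k h
    have h1 := ihM σ k h
    have h2 := ihN σ k h
    simp only [substAll, countFree, size, add_mul]
    linarith
  | lam M ih =>
    intro σ k h
    have hlift : ∀ m, m ≠ k + 1 → ∃ j, liftSub σ m = .var j := by
      intro m hm
      cases m with
      | zero => exact ⟨0, rfl⟩
      | succ m =>
        obtain ⟨j, hj⟩ := h m (fun e => hm (by omega))
        exact ⟨j + 1, by simp [liftSub, hj, shift, rename]⟩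
    have h1 := ih (liftSub σ) (k + 1) hlift
    have h2 : (liftSub σ (k + 1)).size = (σ k).size := size_shift _
    rw [h2] at h1
    simp only [substAll, countFree, size]
    linarith

end Lam

namespace Ty

theorem minusSize_rename (A : Ty) : ∀ ρ, (A.rename ρ).minusSize = A.minusSize := by
  induction A <;> intro ρ <;> simp [rename, minusSize, *]

theorem minusSize_shift (A : Ty) : A.shift.minusSize = A.minusSize := minusSize_rename A _

/-- Size of the η-expansion of a variable at a given type (minus the variable). -/
def esize : Ty → ℕ
  | .var _ => 0
  | .arr A B => esize A + esize B + 3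
  | .all A => esize A

theorem esize_bounds (A : Ty) : A.minusSize ≤ 1 + esize A ∧ 1 + esize A ≤ 2 * A.minusSize := by
  induction A <;> simp_all [minusSize, esize] <;> omega

end Ty

theorem size_etaExpVar (A : Ty) : ∀ x : Lam, (etaExpVar A x).size = x.size + A.esize := by
  induction A with
  | var => intro x; simp [etaExpVar, Ty.esize]
  | all A ih => intro x; simp [etaExpVar, Ty.esize, ih]
  | arr B C ihB ihC =>
    intro x
    simp only [etaExpVar, Lam.size, Ty.esize, ihC, ihB, Lam.size_shift]
    omega

theorem countFree_etaExpVar (A : Ty) : ∀ (x : Lam) (n : ℕ),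
    (etaExpVar A x).countFree n = x.countFree n := by
  induction A with
  | var => intro x n; simp [etaExpVar]
  | all A ih => intro x n; simp [etaExpVar, ih]
  | arr B C ihB ihC =>
    intro x n
    simp [etaExpVar, Lam.countFree, ihC, ihB, Lam.countFree_shift_succ]

theorem swapVar_invol (k n : ℕ) : swapVar k (swapVar k n) = n := by
  unfold swapVar; split_ifs <;> omega

theorem sum_ite_range (d a n : ℕ) :
    (∑ m ∈ Finset.range d, if a + m = n then 1 else 0) =
      if a ≤ n ∧ n < a + d then 1 else 0 := by
  induction d with
  | zero => rw [Finset.range_zero, Finset.sum_empty, if_neg (by omega)]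
  | succ d ih => rw [Finset.sum_range_succ, ih]; split_ifs <;> omega

theorem arrLTm_countFree {g d : ℕ} {N M : Lam}
    (hN : ∀ n, N.countFree n = if n < g then 1 else 0)
    (hM : ∀ n, M.countFree n = if n < d + 1 then 1 else 0) (n : ℕ) :
    (arrLTm g N M).countFree n = if n < g + d + 1 then 1 else 0 := by
  have hb : ∀ m, d + 1 ≤ m → M.countFree m = 0 := by
    intro m hm; rw [hM m, if_neg (by omega)]
  set σ : ℕ → Lam := fun n => match n with
    | 0 => Lam.app (.var 0) N.shift
    | m + 1 => .var (g + 1 + m) with hσ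
  have e : arrLTm g N M = M.substAll σ := rfl
  rw [e, Lam.countFree_substAll M σ n (d + 1) hb, Finset.sum_range_succ']
  have hσ0 : σ 0 = Lam.app (.var 0) N.shift := rfl
  have hσs : ∀ m, σ (m + 1) = .var (g + 1 + m) := fun m => rfl
  have hsum : ∑ m ∈ Finset.range d, M.countFree (m + 1) * (σ (m + 1)).countFree n
      = ∑ m ∈ Finset.range d, if g + 1 + m = n then 1 else 0 := by
    apply Finset.sum_congr rfl
    intro m hm
    rw [Finset.mem_range] at hm
    rw [hσs m, hM, if_pos (by omega), one_mul]
    rfl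
  rw [hsum, hσ0, hM 0, if_pos (Nat.succ_pos d), one_mul, sum_ite_range]
  simp only [Lam.countFree, Lam.countFree_shift_eq, hN]
  split_ifs <;> omega

theorem arrLTm_size {g : ℕ} {N M : Lam} (hM : M.countFree 0 = 1) :
    (arrLTm g N M).size = M.size + N.size + 1 := by
  set σ : ℕ → Lam := fun n => match n with
    | 0 => Lam.app (.var 0) N.shift
    | m + 1 => .var (g + 1 + m) with hσ
  have hvar : ∀ m, m ≠ 0 → ∃ j, σ m = .var j := by
    intro m hm
    cases m with
    | zero => exact absurd rfl hm
    | succ m => exact ⟨g + 1 + m, rfl⟩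
  have h := Lam.size_substAll_one M σ 0 hvar
  have e : arrLTm g N M = M.substAll σ := rfl
  have hσ0 : (σ 0).size = N.size + 2 := by
    show (Lam.app (.var 0) N.shift).size = N.size + 2
    simp [Lam.size, Lam.size_shift]; omega
  rw [hM, hσ0, one_mul] at h
  rw [e]; omega

theorem sder_master {Γ : List Ty} {M : Lam} {B : Ty} (D : SDer Γ M B) :
    D.cutFree → D.noForallL →
    (∀ n, M.countFree n = if n < Γ.length then 1 else 0) ∧
    (∀ n, D.etaTerm.countFree n = if n < Γ.length then 1 else 0) ∧
    M.size ≤ D.etaTerm.size ∧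
    D.etaTerm.size ≤ (Γ.map Ty.minusSize).sum + B.minusSize ∧
    (Γ.map Ty.minusSize).sum + B.minusSize ≤ 2 * D.etaTerm.size := by
  induction D with
  | ax A =>
    intro _ _
    have hb := Ty.esize_bounds A
    refine ⟨?_, ?_, ?_, ?_, ?_⟩
    · intro n; cases n <;> simp [Lam.countFree]
    · intro n
      simp only [SDer.etaTerm, countFree_etaExpVar]
      cases n <;> simp [Lam.countFree]
    · simp only [SDer.etaTerm, size_etaExpVar, Lam.size]; omega
    · simp only [SDer.etaTerm, size_etaExpVar, Lam.size, List.map_cons, List.map_nil,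
        List.sum_cons, List.sum_nil]
      omega
    · simp only [SDer.etaTerm, size_etaExpVar, Lam.size, List.map_cons, List.map_nil,
        List.sum_cons, List.sum_nil]
      omega
  | @exch Γ₁ A' B' Γ₂ M' C' D ih =>
    intro hcut hall
    obtain ⟨h1, h2, h3, h4, h5⟩ := ih hcut hall
    have hlen : (Γ₁ ++ A' :: B' :: Γ₂).length = Γ₁.length + Γ₂.length + 2 := by
      simp; omega
    have hlen' : (Γ₁ ++ B' :: A' :: Γ₂).length = Γ₁.length + Γ₂.length + 2 := by
      simp; omega
    have hsum : ((Γ₁ ++ B' :: A' :: Γ₂).map Ty.minusSize).sum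
        = ((Γ₁ ++ A' :: B' :: Γ₂).map Ty.minusSize).sum := by
      simp [List.map_append, List.sum_append]; omega
    refine ⟨?_, ?_, ?_, ?_, ?_⟩
    · intro n
      rw [Lam.countFree_rename_invol _ _ (swapVar_invol Γ₁.length), h1, hlen, hlen']
      unfold swapVar; split_ifs <;> omega
    · intro n
      simp only [SDer.etaTerm]
      rw [Lam.countFree_rename_invol _ _ (swapVar_invol Γ₁.length), h2, hlen, hlen']
      unfold swapVar; split_ifs <;> omega
    · simp only [SDer.etaTerm]
      rw [Lam.size_rename, Lam.size_rename]; exact h3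
    · simp only [SDer.etaTerm]
      rw [Lam.size_rename, hsum]; exact h4
    · simp only [SDer.etaTerm]
      rw [Lam.size_rename, hsum]; exact h5
  | cut Γc D₁ D₂ ih₁ ih₂ =>
    intro hcut _
    exact False.elim hcut
  | @arrR Γc M' A' B' D ih =>
    intro hcut hall
    obtain ⟨h1, h2, h3, h4, h5⟩ := ih hcut hall
    simp only [List.length_cons, List.map_cons, List.sum_cons] at h1 h2 h4 h5
    refine ⟨?_, ?_, ?_, ?_, ?_⟩
    · intro n
      simp only [Lam.countFree]
      rw [h1 (n + 1)]
      split_ifs <;> omega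
    · intro n
      simp only [SDer.etaTerm, Lam.countFree]
      rw [h2 (n + 1)]
      split_ifs <;> omega
    · simp only [SDer.etaTerm, Lam.size]; omega
    · simp only [SDer.etaTerm, Lam.size, Ty.minusSize]; omega
    · simp only [SDer.etaTerm, Lam.size, Ty.minusSize]; omega
  | @arrL Γl Δ N' M' A' B' C' D₁ D₂ ih₁ ih₂ =>
    intro hcut hall
    obtain ⟨hc1, hc2⟩ := hcut
    obtain ⟨ha1, ha2⟩ := hall
    obtain ⟨p1, p2, p3, p4, p5⟩ := ih₁ hc1 ha1
    obtain ⟨q1, q2, q3, q4, q5⟩ := ih₂ hc2 ha2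
    simp only [List.length_cons, List.map_cons, List.sum_cons] at q1 q2 q4 q5
    have q1' : ∀ n, M'.countFree n = if n < Δ.length + 1 then 1 else 0 := q1
    have q2' : ∀ n, D₂.etaTerm.countFree n = if n < Δ.length + 1 then 1 else 0 := q2
    have hs1 : (arrLTm Γl.length N' M').size = M'.size + N'.size + 1 :=
      arrLTm_size (by rw [q1 0]; simp)
    have hs2 : (arrLTm Γl.length D₁.etaTerm D₂.etaTerm).size
        = D₂.etaTerm.size + D₁.etaTerm.size + 1 :=
      arrLTm_size (by rw [q2 0]; simp)
    refine ⟨?_, ?_, ?_, ?_, ?_⟩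
    · intro n
      rw [arrLTm_countFree p1 q1' n]
      simp only [List.length_cons, List.length_append]
    · intro n
      simp only [SDer.etaTerm]
      rw [arrLTm_countFree p2 q2' n]
      simp only [List.length_cons, List.length_append]
    · simp only [SDer.etaTerm]
      rw [hs1, hs2]; omega
    · simp only [SDer.etaTerm, List.map_cons, List.map_append, List.sum_cons,
        List.sum_append, Ty.minusSize]
      rw [hs2]; omega
    · simp only [SDer.etaTerm, List.map_cons, List.map_append, List.sum_cons,
        List.sum_append, Ty.minusSize]
      rw [hs2]; omega
  | @allR Γc M' A' D ih =>
    intro hcut hall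
    obtain ⟨h1, h2, h3, h4, h5⟩ := ih hcut hall
    have hlen : (Γc.map Ty.shift).length = Γc.length := by simp
    have hsum : ((Γc.map Ty.shift).map Ty.minusSize).sum = (Γc.map Ty.minusSize).sum := by
      simp [List.map_map, Function.comp_def, Ty.minusSize_shift]
    rw [hlen] at h1 h2
    rw [hsum] at h4 h5
    refine ⟨h1, ?_, ?_, ?_, ?_⟩
    · intro n; simp only [SDer.etaTerm]; exact h2 n
    · simp only [SDer.etaTerm]; exact h3
    · simp only [SDer.etaTerm, Ty.minusSize]; exact h4
    · simp only [SDer.etaTerm, Ty.minusSize]; exact h5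
  | allL Bt D ih =>
    intro _ hall
    exact False.elim hall

/-- Lemma 5.1: for every cut-free derivation `D ⊲ Γ ⊢ M : B` of
`IMLL₂` containing no instance of `∀L`,
`|M| ≤ |M^Γ_B| ≤ |Γ⁻| + |B⁻| ≤ 2·|M^Γ_B|`,
where `M^Γ_B` is the η-long normal form of `M` obtained by η-expanding `D`. -/
theorem size_bounds_of_cutFree_noForallL
    {Γ : List Ty} {M : Lam} {B : Ty} (D : SDer Γ M B)
    (hcut : D.cutFree) (hall : D.noForallL) :
    M.size ≤ D.etaTerm.size ∧
    D.etaTerm.size ≤ (Γ.map Ty.minusSize).sum + B.minusSize ∧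
    (Γ.map Ty.minusSize).sum + B.minusSize ≤ 2 * D.etaTerm.size := by
  obtain ⟨_, _, h3, h4, h5⟩ := sder_master D hcut hall
  exact ⟨h3, h4, h5⟩

end LEMPaper
end
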